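/- The only directed tree (up to isomorphism of directed trees) admitting a formally normal weighted shift with all weights nonzero is ℤ with edges {(n, n+1) : n ∈ ℤ}. -/

import Mathlib

open scoped ENNReal ComplexConjugate Classical

/-- A directed tree: a connected directed graph with no (directed) circuits in which
every vertex has at most one parent and at most one vertex has no parent (the root). -/
structure DirectedTree (V : Type*) where
  E : V → V → Prop
  parent_unique : ∀ ⦃u₁ u₂ v : V⦄, E u₁ v → E u₂ v → u₁ = u₂
  no_circuit : ∀ v : V, ¬ Relation.TransGen E v v
  connected : ∀ u v : V, Relation.ReflTransGen (fun a b => E a b ∨ E b a) u v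
  root_unique : ∀ ⦃r₁ r₂ : V⦄, (∀ u, ¬ E u r₁) → (∀ u, ¬ E u r₂) → r₁ = r₂

namespace DirectedTree

variable {V : Type*} (T : DirectedTree V)

/-- `v ∈ V°`, i.e. `v` is not a root. -/
def HasParent (v : V) : Prop := ∃ u, T.E u v

/-- The parent partial map (junk value `v` itself at a root). -/
noncomputable def par (v : V) : V := if h : T.HasParent v then h.choose else v

theorem par_spec {v : V} (h : T.HasParent v) : T.E (T.par v) v := by
  rw [par, dif_pos h]; exact h.choose_spec

/-- the child set of a vertex -/
def chi (u : V) : Set V := {v | T.E u v}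

/-- the child set of a set of vertices -/
def chiSet (W : Set V) : Set V := {v | ∃ u ∈ W, T.E u v}

/-- the iterated child set `Chi^n(u)` -/
def chiN (n : ℕ) (u : V) : Set V := (T.chiSet)^[n] {u}

/-- the set of descendants of a vertex -/
def des (u : V) : Set V := ⋃ n : ℕ, T.chiN n u

/-- the iterated parent partial map, as an `Option`-valued map -/
noncomputable def parN : ℕ → V → Option V
  | 0, v => some v
  | n + 1, v => if T.HasParent v then parN n (T.par v) else none

end DirectedTree

/-- the Hilbert space `ℓ²(V)` -/
abbrev l2 (V : Type*) : Type _ := lp (fun _ : V => ℂ) 2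

/-- the canonical orthonormal basis vector `e_u` of `ℓ²(V)` -/
noncomputable def evec {V : Type*} (u : V) : l2 V := lp.single 2 u 1

variable {V : Type*}

/-- the formal action `Λ_T` of a weighted shift with weights `lam` -/
noncomputable def lamMap (T : DirectedTree V) (lam : V → ℂ) (f : V → ℂ) : V → ℂ :=
  fun v => if T.HasParent v then lam v * f (T.par v) else 0

theorem lamMap_add (T : DirectedTree V) (lam : V → ℂ) (f g : V → ℂ) :
    lamMap T lam (f + g) = lamMap T lam f + lamMap T lam g := by
  funext v
  simp only [lamMap, Pi.add_apply]
  split_ifs <;> ring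

theorem lamMap_smul (T : DirectedTree V) (lam : V → ℂ) (c : ℂ) (f : V → ℂ) :
    lamMap T lam (c • f) = c • lamMap T lam f := by
  funext v
  simp only [lamMap, Pi.smul_apply, smul_eq_mul]
  split_ifs <;> ring

/-- the (maximal) domain of the weighted shift `S_lam` -/
noncomputable def shiftDomain (T : DirectedTree V) (lam : V → ℂ) : Submodule ℂ (l2 V) where
  carrier := {f : l2 V | Memℓp (lamMap T lam ⇑f) 2}
  zero_mem' := by
    have : lamMap T lam ⇑(0 : l2 V) = 0 := by
      funext v; simp [lamMap]
    simp only [Set.mem_setOf_eq, this]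
    exact zero_memℓp
  add_mem' := by
    intro f g hf hg
    have h : lamMap T lam ⇑(f + g) = lamMap T lam ⇑f + lamMap T lam ⇑g := by
      rw [lp.coeFn_add]; exact lamMap_add T lam _ _
    simp only [Set.mem_setOf_eq, h]
    exact hf.add hg
  smul_mem' := by
    intro c f hf
    have h : lamMap T lam ⇑(c • f) = c • lamMap T lam ⇑f := by
      rw [lp.coeFn_smul]; exact lamMap_smul T lam _ _
    simp only [Set.mem_setOf_eq, h]
    exact hf.const_smul c

/-- the weighted shift `S_lam` on the directed tree `T`, as an unbounded operator in `ℓ²(V)` -/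
noncomputable def shift (T : DirectedTree V) (lam : V → ℂ) : l2 V →ₗ.[ℂ] l2 V where
  domain := shiftDomain T lam
  toFun :=
    { toFun := fun f => ⟨lamMap T lam ⇑(f : l2 V), f.2⟩
      map_add' := by
        intro f g
        apply Subtype.ext
        exact lamMap_add T lam _ _
      map_smul' := by
        intro c f
        apply Subtype.ext
        exact lamMap_smul T lam _ _ }
/-- A densely defined operator `A` is formally normal if `dom A ⊆ dom A*` and
`‖A* h‖ = ‖A h‖` for all `h ∈ dom A`. -/
def FormallyNormal {H : Type*} [NormedAddCommGroup H] [InnerProductSpace ℂ H]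
    [CompleteSpace H] (A : H →ₗ.[ℂ] H) : Prop :=
  Dense (A.domain : Set H) ∧ A.domain ≤ A.adjoint.domain ∧
    ∀ (f : H) (hf : f ∈ A.domain) (hf' : f ∈ A.adjoint.domain),
      ‖A.adjoint ⟨f, hf'⟩‖ = ‖A ⟨f, hf⟩‖

/-- A densely defined operator `A` is normal if `dom A = dom A*` and
`‖A* h‖ = ‖A h‖` for all `h ∈ dom A` (such an operator is automatically closed). -/
def IsNormalOp {H : Type*} [NormedAddCommGroup H] [InnerProductSpace ℂ H]
    [CompleteSpace H] (A : H →ₗ.[ℂ] H) : Prop :=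
  Dense (A.domain : Set H) ∧ A.domain = A.adjoint.domain ∧
    ∀ (f : H) (hf : f ∈ A.domain) (hf' : f ∈ A.adjoint.domain),
      ‖A.adjoint ⟨f, hf'⟩‖ = ‖A ⟨f, hf⟩‖


/-! ### Auxiliary lemmas -/

section Aux

variable {V : Type*}

lemma memℓp_two_iff' (f : V → ℂ) : Memℓp f 2 ↔ Summable (fun v => ‖f v‖ ^ 2) := by
  rw [memℓp_gen_iff (by norm_num)]
  norm_num

lemma l2_summable_sq (f : l2 V) : Summable (fun v => ‖f v‖ ^ 2) :=
  (memℓp_two_iff' _).1 (lp.memℓp f)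

lemma l2_norm_sq (f : l2 V) : ‖f‖ ^ 2 = ∑' v, ‖f v‖ ^ 2 := by
  have := lp.norm_rpow_eq_tsum (p := 2) (by norm_num) f
  norm_num at this
  exact_mod_cast this

lemma l2_inner_tsum (f g : l2 V) : (inner ℂ f g : ℂ) = ∑' v, conj (f v) * g v := by
  rw [lp.inner_eq_tsum]; exact tsum_congr fun v => by simp only [RCLike.inner_apply]; ring

lemma evec_apply (u v : V) : (evec u : l2 V) v = if v = u then 1 else 0 := by
  rw [evec, lp.single_apply]
  split_ifs with h <;> simp [h]

lemma inner_evec (u : V) (g : l2 V) : (inner ℂ (evec u) g : ℂ) = g u := by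
  rw [evec, lp.inner_single_left]; simp

lemma norm_evec (u : V) : ‖(evec u : l2 V)‖ = 1 := by
  have := lp.norm_single (p := 2) (E := fun _ : V => ℂ) (by norm_num) u (1:ℂ)
  simpa [evec] using this

variable (T : DirectedTree V) (lam : V → ℂ)

lemma haspar_of_E {u v : V} (h : T.E u v) : T.HasParent v := ⟨u, h⟩

lemma par_eq {u v : V} (h : T.E u v) : T.par v = u :=
  T.parent_unique (T.par_spec ⟨u, h⟩) h

lemma lamMap_evec (u : V) :
    lamMap T lam ⇑(evec u : l2 V) = fun v => if T.E u v then lam v else 0 := by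
  funext v
  rw [lamMap]
  by_cases h : T.HasParent v
  · rw [if_pos h, evec_apply]
    by_cases hE : T.E u v
    · rw [if_pos ((par_eq T hE) : T.par v = u), if_pos hE, mul_one]
    · rw [if_neg, if_neg hE, mul_zero]
      intro hpu
      exact hE (hpu ▸ T.par_spec h)
  · rw [if_neg h, if_neg (fun hE => h (haspar_of_E T hE))]

lemma shift_coe (f : (shift T lam).domain) (v : V) :
    (shift T lam f : l2 V) v = lamMap T lam (⇑(f : l2 V)) v := rfl

lemma shift_coe' (f : (shift T lam).domain) :
    ⇑(shift T lam f : l2 V) = lamMap T lam (⇑(f : l2 V)) := rfl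

lemma inner_evec_shift (u : V) (g : (shift T lam).domain) :
    (inner ℂ (evec u) (shift T lam g) : ℂ) = lamMap T lam (⇑(g : l2 V)) u := by
  rw [inner_evec, shift_coe]

end Aux

section Comb

variable {V : Type*}

lemma tree_equiv_int (T : DirectedTree V) [Nonempty V] (hp : ∀ v, T.HasParent v)
    (hc : ∀ u, ∃! v, T.E u v) :
    ∃ φ : V ≃ ℤ, ∀ a b : V, T.E a b ↔ φ b = φ a + 1 := by
  classical
  set c : V → V := fun u => (hc u).choose with hcdef
  have hE : ∀ u, T.E u (c u) := fun u => (hc u).choose_spec.1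
  have hcu : ∀ {u v}, T.E u v → v = c u := fun {u v} h => (hc u).choose_spec.2 v h
  have hpar : ∀ {u v}, T.E u v → T.par v = u := fun {u v} h => par_eq T h
  have left : ∀ u, T.par (c u) = u := fun u => hpar (hE u)
  have right : ∀ v, c (T.par v) = v := fun v => (hcu (T.par_spec (hp v))).symm
  set cE : Equiv.Perm V := ⟨c, T.par, left, right⟩ with hcE
  have hcEapp : ∀ x, cE x = c x := fun _ => rfl
  have hcEsymm : ∀ x, cE⁻¹ x = T.par x := fun _ => rfl
  obtain ⟨v₀⟩ := ‹Nonempty V›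
  set ψ : ℤ → V := fun n => (cE ^ n) v₀ with hψ
  have hsucc : ∀ (n : ℤ) (x : V), (cE ^ (n + 1)) x = c ((cE ^ n) x) := by
    intro n x
    have : cE ^ (n + 1) = cE * cE ^ n := by rw [add_comm, zpow_add, zpow_one]
    rw [this, Equiv.Perm.mul_apply, hcEapp]
  have hchain : ∀ (k : ℕ) (x : V), Relation.TransGen T.E x ((cE ^ ((k : ℤ) + 1)) x) := by
    intro k
    induction k with
    | zero =>
      intro x
      rw [show ((0:ℕ):ℤ) + 1 = 0 + 1 by norm_num, hsucc 0 x]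
      simp only [zpow_zero, Equiv.Perm.one_apply]
      exact Relation.TransGen.single (hE x)
    | succ k ih =>
      intro x
      rw [show ((k+1:ℕ):ℤ) + 1 = ((k:ℤ)+1) + 1 by push_cast; ring, hsucc ((k : ℤ) + 1) x]
      exact Relation.TransGen.tail (ih x) (hE _)
  have hinj : Function.Injective ψ := by
    intro m n hmn
    by_contra hne
    wlog hlt : m < n generalizing m n
    · exact this hmn.symm (Ne.symm hne) (by omega)
    have hk : n - m - 1 ≥ 0 := by omega
    set k : ℕ := (n - m - 1).toNat with hkdef
    have hkeq : (k : ℤ) + 1 + m = n := by omega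
    have hcomp : ∀ (p q : ℤ) (x : V), (cE ^ p) ((cE ^ q) x) = (cE ^ (p + q)) x := by
      intro p q x
      rw [zpow_add, Equiv.Perm.mul_apply]
    have heq : (cE ^ ((k : ℤ) + 1)) (ψ m) = ψ m := by
      have h1 : (cE ^ ((k : ℤ) + 1)) (ψ m) = ψ (((k : ℤ) + 1) + m) :=
        hcomp ((k : ℤ) + 1) m v₀
      rw [h1, hkeq]
      exact hmn.symm
    have hch := hchain k (ψ m)
    rw [heq] at hch
    exact T.no_circuit (ψ m) hch
  have hsurj : Function.Surjective ψ := by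
    intro v
    have hpath := T.connected v₀ v
    induction hpath with
    | refl => exact ⟨0, by simp [hψ]⟩
    | tail _ hstep ih =>
      obtain ⟨n, rfl⟩ := ih
      rcases hstep with h | h
      · refine ⟨n + 1, ?_⟩
        show (cE ^ (n + 1)) v₀ = _
        rw [hsucc n v₀]
        exact (hcu h).symm
      · refine ⟨n - 1, ?_⟩
        show (cE ^ (n - 1)) v₀ = _
        rw [sub_eq_add_neg, add_comm, zpow_add, Equiv.Perm.mul_apply, zpow_neg_one, hcEsymm]
        exact hpar h
  set e : V ≃ ℤ := (Equiv.ofBijective ψ ⟨hinj, hsurj⟩).symm with he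
  refine ⟨e, fun a b => ?_⟩
  have hea : ∀ x : V, ψ (e x) = x := fun x => (Equiv.ofBijective ψ ⟨hinj, hsurj⟩).apply_symm_apply x
  have heψ : ∀ n : ℤ, e (ψ n) = n := fun n => (Equiv.ofBijective ψ ⟨hinj, hsurj⟩).symm_apply_apply n
  constructor
  · intro h
    have hb : b = c a := hcu h
    have h2 : ψ (e a + 1) = b := by
      show (cE ^ (e a + 1)) v₀ = b
      rw [hsucc, show (cE ^ e a) v₀ = a from hea a, ← hb]
    rw [← h2, heψ]
  · intro h
    have hb : b = ψ (e a + 1) := by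
      have := congrArg ψ h
      rwa [hea] at this
    have h3 : ψ (e a + 1) = c a := by
      show (cE ^ (e a + 1)) v₀ = c a
      rw [hsucc, show (cE ^ e a) v₀ = a from hea a]
    rw [hb, h3]
    exact hE a

end Comb

section Forward

variable {V : Type*} (T : DirectedTree V) (lam : V → ℂ)

lemma key_summable (hdense : Dense ((shift T lam).domain : Set (l2 V))) (u : V) :
    Summable fun v => ‖(if T.E u v then lam v else 0 : ℂ)‖ ^ 2 := by
  by_contra hns
  have hzero : ∀ g ∈ (shift T lam).domain, (inner ℂ (evec u) g : ℂ) = 0 := by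
    intro g hg
    rw [inner_evec]
    by_contra hgu
    apply hns
    have hg' : Memℓp (lamMap T lam ⇑g) 2 := hg
    have hsum : Summable fun v => ‖lamMap T lam (⇑g) v‖ ^ 2 := (memℓp_two_iff' _).1 hg'
    have hle : ∀ v, ‖(if T.E u v then lam v else 0 : ℂ)‖ ^ 2 * ‖g u‖ ^ 2
        ≤ ‖lamMap T lam (⇑g) v‖ ^ 2 := by
      intro v
      by_cases hE : T.E u v
      · have h1 : T.HasParent v := ⟨u, hE⟩
        have h2 : T.par v = u := par_eq T hE
        rw [if_pos hE, lamMap, if_pos h1, h2, norm_mul, mul_pow]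
      · rw [if_neg hE]
        have hz : ‖(0 : ℂ)‖ ^ 2 * ‖(g : l2 V) u‖ ^ 2 = 0 := by simp
        rw [hz]
        positivity
    have hsum2 : Summable fun v => ‖(if T.E u v then lam v else 0 : ℂ)‖ ^ 2 * ‖g u‖ ^ 2 :=
      Summable.of_nonneg_of_le (fun v => by positivity) hle hsum
    have hc : (‖g u‖ ^ 2) ≠ 0 := pow_ne_zero _ (norm_ne_zero_iff.2 hgu)
    have h2 := hsum2.mul_right ((‖g u‖ ^ 2)⁻¹)
    refine Summable.congr h2 fun v => ?_
    rw [mul_assoc, mul_inv_cancel₀ hc, mul_one]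
  have hcl : closure ((shift T lam).domain : Set (l2 V)) ⊆ {g | (inner ℂ (evec u) g : ℂ) = 0} := by
    apply closure_minimal
    · intro g hg; exact hzero g hg
    · exact isClosed_eq (Continuous.inner continuous_const continuous_id) continuous_const
  have h0 : (inner ℂ (evec u) (evec u : l2 V) : ℂ) = 0 := hcl (by rw [hdense.closure_eq]; trivial)
  rw [inner_evec, evec_apply, if_pos rfl] at h0
  exact one_ne_zero h0

lemma evec_mem_dom (hdense : Dense ((shift T lam).domain : Set (l2 V))) (u : V) :
    (evec u : l2 V) ∈ (shift T lam).domain := by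
  show Memℓp (lamMap T lam ⇑(evec u : l2 V)) 2
  rw [lamMap_evec]
  exact (memℓp_two_iff' _).2 (key_summable T lam hdense u)

lemma norm_shift_sq (f : (shift T lam).domain) :
    ‖(shift T lam f : l2 V)‖ ^ 2 = ∑' v, ‖lamMap T lam (⇑(f : l2 V)) v‖ ^ 2 := by
  rw [l2_norm_sq]
  rfl

lemma norm_shift_evec_sq {u : V} (h : (evec u : l2 V) ∈ (shift T lam).domain) :
    ‖(shift T lam ⟨evec u, h⟩ : l2 V)‖ ^ 2
      = ∑' v, ‖(if T.E u v then lam v else 0 : ℂ)‖ ^ 2 := by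
  rw [norm_shift_sq]
  exact tsum_congr fun v => by
    rw [show ((⟨evec u, h⟩ : (shift T lam).domain) : l2 V) = evec u from rfl, lamMap_evec]

lemma adj_evec_exists (u : V) :
    ∀ g : (shift T lam).domain,
      (inner ℂ (if h : T.HasParent u then conj (lam u) • evec (T.par u) else 0 : l2 V)
          ((g : l2 V)) : ℂ)
        = inner ℂ (evec u : l2 V) ((shift T lam g : l2 V)) := by
  intro g
  rw [inner_evec_shift, lamMap]
  by_cases h : T.HasParent u
  · rw [dif_pos h, if_pos h, inner_smul_left, inner_evec, Complex.conj_conj]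
  · rw [dif_neg h, if_neg h, inner_zero_left]

lemma evec_mem_adj (u : V) : (evec u : l2 V) ∈ (shift T lam).adjoint.domain :=
  LinearPMap.mem_adjoint_domain_of_exists _ ⟨_, adj_evec_exists T lam u⟩

lemma adj_evec (hdense : Dense ((shift T lam).domain : Set (l2 V))) (u : V)
    (h : (evec u : l2 V) ∈ (shift T lam).adjoint.domain) :
    (shift T lam).adjoint ⟨evec u, h⟩
      = if h : T.HasParent u then conj (lam u) • evec (T.par u) else 0 :=
  LinearPMap.adjoint_apply_eq hdense _ (fun g => adj_evec_exists T lam u g)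

end Forward

section Forward2

variable {V : Type*} (T : DirectedTree V) (lam : V → ℂ)

lemma forward_haspar
    (hlam : ∀ v, T.HasParent v → lam v ≠ 0)
    (hne : ∃ f : (shift T lam).domain, shift T lam f ≠ 0)
    (hdense : Dense ((shift T lam).domain : Set (l2 V)))
    (hnorm : ∀ (f : l2 V) (hf : f ∈ (shift T lam).domain)
      (hf' : f ∈ (shift T lam).adjoint.domain),
      ‖(shift T lam).adjoint ⟨f, hf'⟩‖ = ‖shift T lam ⟨f, hf⟩‖)
    (u : V) : T.HasParent u := by
  by_contra h
  have h1 := hnorm (evec u) (evec_mem_dom T lam hdense u) (evec_mem_adj T lam u)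
  rw [adj_evec T lam hdense u, dif_neg h, norm_zero] at h1
  have h2 : (shift T lam ⟨evec u, evec_mem_dom T lam hdense u⟩ : l2 V) = 0 :=
    norm_eq_zero.mp h1.symm
  have hnochild : ∀ v, ¬ T.E u v := by
    intro v hEv
    have h3 : lamMap T lam ⇑(evec u : l2 V) v = 0 := by
      have := congrArg (fun x : l2 V => x v) h2
      simpa [shift_coe] using this
    rw [lamMap_evec] at h3
    simp only [if_pos hEv] at h3
    exact hlam v ⟨u, hEv⟩ h3
  have hall : ∀ w : V, w = u := by
    intro w
    have hpath := T.connected u w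
    induction hpath with
    | refl => rfl
    | tail _ hstep ih =>
      rcases hstep with h' | h'
      · rw [ih] at h'
        exact absurd h' (hnochild _)
      · rw [ih] at h'
        exact absurd (⟨_, h'⟩ : T.HasParent u) h
  obtain ⟨f, hf⟩ := hne
  apply hf
  apply lp.ext
  funext v
  have h4 : lamMap T lam (⇑(f : l2 V)) v = 0 := by
    rw [hall v, lamMap, if_neg h]
  rw [shift_coe, h4]
  rfl

lemma forward_sigma
    (hdense : Dense ((shift T lam).domain : Set (l2 V)))
    (hnorm : ∀ (f : l2 V) (hf : f ∈ (shift T lam).domain)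
      (hf' : f ∈ (shift T lam).adjoint.domain),
      ‖(shift T lam).adjoint ⟨f, hf'⟩‖ = ‖shift T lam ⟨f, hf⟩‖)
    (hpar : ∀ v, T.HasParent v) (u : V) :
    (∑' v, ‖(if T.E u v then lam v else 0 : ℂ)‖ ^ 2) = ‖lam u‖ ^ 2 := by
  have h1 := hnorm (evec u) (evec_mem_dom T lam hdense u) (evec_mem_adj T lam u)
  rw [adj_evec T lam hdense u, dif_pos (hpar u), norm_smul, norm_evec, mul_one,
    RCLike.norm_conj] at h1
  rw [← norm_shift_evec_sq T lam (evec_mem_dom T lam hdense u), ← h1]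

set_option maxHeartbeats 1000000 in
lemma forward_unique
    (hlam : ∀ v, T.HasParent v → lam v ≠ 0)
    (hdense : Dense ((shift T lam).domain : Set (l2 V)))
    (hdom : (shift T lam).domain ≤ (shift T lam).adjoint.domain)
    (hnorm : ∀ (f : l2 V) (hf : f ∈ (shift T lam).domain)
      (hf' : f ∈ (shift T lam).adjoint.domain),
      ‖(shift T lam).adjoint ⟨f, hf'⟩‖ = ‖shift T lam ⟨f, hf⟩‖)
    (hpar : ∀ v, T.HasParent v) (u : V) : ∃! v, T.E u v := by
  have hσ := forward_sigma T lam hdense hnorm hpar u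
  have hlamu : lam u ≠ 0 := hlam u (hpar u)
  have hex : ∃ v, T.E u v := by
    by_contra hno
    push_neg at hno
    have h0 : (∑' v : V, ‖(if T.E u v then lam v else 0 : ℂ)‖ ^ 2) = 0 := by
      convert tsum_zero with v
      rw [if_neg (hno v), norm_zero]
      norm_num
    rw [h0] at hσ
    have : ‖lam u‖ = 0 := by nlinarith [norm_nonneg (lam u)]
    exact hlamu (norm_eq_zero.mp this)
  obtain ⟨v₁, hv₁⟩ := hex
  refine ⟨v₁, hv₁, fun v₂ hv₂ => ?_⟩
  by_contra hne12
  set a := lam v₁ with hadef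
  set b := lam v₂ with hbdef
  have ha : a ≠ 0 := hlam v₁ (hpar v₁)
  have hb : b ≠ 0 := hlam v₂ (hpar v₂)
  have hmem1 := evec_mem_dom T lam hdense v₁
  have hmem2 := evec_mem_dom T lam hdense v₂
  set F : l2 V := a • evec v₁ + b • evec v₂ with hF
  have hFmem : F ∈ (shift T lam).domain :=
    Submodule.add_mem _ (Submodule.smul_mem _ _ hmem1) (Submodule.smul_mem _ _ hmem2)
  have hFadj : F ∈ (shift T lam).adjoint.domain := hdom hFmem
  have hdecD : (⟨F, hFmem⟩ : (shift T lam).domain)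
      = a • ⟨evec v₁, hmem1⟩ + b • ⟨evec v₂, hmem2⟩ := by
    apply Subtype.ext
    rfl
  have hdecA : (⟨F, hFadj⟩ : (shift T lam).adjoint.domain)
      = a • ⟨evec v₁, evec_mem_adj T lam v₁⟩ + b • ⟨evec v₂, evec_mem_adj T lam v₂⟩ := by
    apply Subtype.ext
    rfl
  have hSF : shift T lam ⟨F, hFmem⟩
      = a • shift T lam ⟨evec v₁, hmem1⟩ + b • shift T lam ⟨evec v₂, hmem2⟩ := by
    rw [hdecD, LinearPMap.map_add, LinearPMap.map_smul, LinearPMap.map_smul]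
  have horth : (inner ℂ (shift T lam ⟨evec v₁, hmem1⟩ : l2 V)
      (shift T lam ⟨evec v₂, hmem2⟩ : l2 V) : ℂ) = 0 := by
    rw [l2_inner_tsum]
    convert tsum_zero with v
    rw [shift_coe, shift_coe]
    rw [show ((⟨evec v₁, hmem1⟩ : (shift T lam).domain) : l2 V) = evec v₁ from rfl]
    rw [show ((⟨evec v₂, hmem2⟩ : (shift T lam).domain) : l2 V) = evec v₂ from rfl]
    rw [lamMap_evec, lamMap_evec]
    by_cases h1 : T.E v₁ v
    · have h2 : ¬ T.E v₂ v := fun h2 => hne12 (T.parent_unique h2 h1)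
      simp [h1, h2]
    · simp [h1]
  have hn1 : ‖(shift T lam ⟨evec v₁, hmem1⟩ : l2 V)‖ ^ 2 = ‖a‖ ^ 2 := by
    rw [norm_shift_evec_sq]
    exact forward_sigma T lam hdense hnorm hpar v₁
  have hn2 : ‖(shift T lam ⟨evec v₂, hmem2⟩ : l2 V)‖ ^ 2 = ‖b‖ ^ 2 := by
    rw [norm_shift_evec_sq]
    exact forward_sigma T lam hdense hnorm hpar v₂
  have hSFsq : ‖(shift T lam ⟨F, hFmem⟩ : l2 V)‖ ^ 2
      = ‖a‖ ^ 2 * ‖a‖ ^ 2 + ‖b‖ ^ 2 * ‖b‖ ^ 2 := by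
    rw [hSF, norm_add_sq (𝕜 := ℂ), inner_smul_left, inner_smul_right, horth]
    rw [norm_smul, norm_smul, mul_pow, mul_pow, hn1, hn2]
    simp
  have hadj1 : (shift T lam).adjoint ⟨evec v₁, evec_mem_adj T lam v₁⟩
      = conj a • evec u := by
    rw [adj_evec T lam hdense v₁, dif_pos (hpar v₁), par_eq T hv₁]
  have hadj2 : (shift T lam).adjoint ⟨evec v₂, evec_mem_adj T lam v₂⟩
      = conj b • evec u := by
    rw [adj_evec T lam hdense v₂, dif_pos (hpar v₂), par_eq T hv₂]
  have hSadjF : (shift T lam).adjoint ⟨F, hFadj⟩ = (a * conj a + b * conj b) • evec u := by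
    rw [hdecA, LinearPMap.map_add, LinearPMap.map_smul, LinearPMap.map_smul, hadj1, hadj2,
      smul_smul, smul_smul, ← add_smul]
  have hreal1 : a * conj a = ((‖a‖ ^ 2 : ℝ) : ℂ) := by
    rw [Complex.mul_conj]
    norm_cast
    rw [Complex.normSq_eq_norm_sq]
  have hreal2 : b * conj b = ((‖b‖ ^ 2 : ℝ) : ℂ) := by
    rw [Complex.mul_conj]
    norm_cast
    rw [Complex.normSq_eq_norm_sq]
  have hnormadj : ‖(shift T lam).adjoint ⟨F, hFadj⟩‖ = ‖a‖ ^ 2 + ‖b‖ ^ 2 := by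
    rw [hSadjF, norm_smul, norm_evec, mul_one, hreal1, hreal2, ← Complex.ofReal_add]
    rw [Complex.norm_real]
    exact abs_of_nonneg (by positivity)
  have heq := hnorm F hFmem hFadj
  rw [hnormadj] at heq
  have heq2 : (‖a‖ ^ 2 + ‖b‖ ^ 2) ^ 2 = ‖a‖ ^ 2 * ‖a‖ ^ 2 + ‖b‖ ^ 2 * ‖b‖ ^ 2 := by
    rw [heq, hSFsq]
  have ha' : 0 < ‖a‖ := norm_pos_iff.2 ha
  have hb' : 0 < ‖b‖ := norm_pos_iff.2 hb
  nlinarith [mul_pos (mul_pos ha' ha') (mul_pos hb' hb')]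

lemma forward_main
    (hlam : ∀ v, T.HasParent v → lam v ≠ 0)
    (hne : ∃ f : (shift T lam).domain, shift T lam f ≠ 0)
    (hfn : FormallyNormal (shift T lam)) :
    ∃ φ : V ≃ ℤ, ∀ a b : V, T.E a b ↔ φ b = φ a + 1 := by
  obtain ⟨hdense, hdom, hnorm⟩ := hfn
  have hpar := forward_haspar T lam hlam hne hdense hnorm
  have hc := forward_unique T lam hlam hdense hdom hnorm hpar
  have : Nonempty V := by
    obtain ⟨f, hf⟩ := hne
    by_contra hemp
    rw [not_nonempty_iff] at hemp
    exact hf (by apply lp.ext; funext v; exact hemp.elim v)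
  exact tree_equiv_int T hpar hc

end Forward2

section Backward

variable {V : Type*}

lemma backward_main (T : DirectedTree V) (φ : V ≃ ℤ)
    (hφ : ∀ a b : V, T.E a b ↔ φ b = φ a + 1) :
    ∃ lam : V → ℂ, (∀ v : V, T.HasParent v → lam v ≠ 0) ∧
        (∃ f : (shift T lam).domain, shift T lam f ≠ 0) ∧
        FormallyNormal (shift T lam) := by
  classical
  set lam : V → ℂ := fun _ => 1 with hlamdef
  set σ : V ≃ V := ⟨fun v => φ.symm (φ v - 1), fun v => φ.symm (φ v + 1),
    fun v => by simp, fun v => by simp⟩ with hσdef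
  have hσapp : ∀ v, σ v = φ.symm (φ v - 1) := fun v => rfl
  have hEσ : ∀ v, T.E (σ v) v := by
    intro v
    rw [hφ]
    rw [hσapp, Equiv.apply_symm_apply]
    ring
  have hp : ∀ v, T.HasParent v := fun v => ⟨σ v, hEσ v⟩
  have hparv : ∀ v, T.par v = σ v := fun v => par_eq T (hEσ v)
  have hlamMap : ∀ f : V → ℂ, ∀ v, lamMap T lam f v = f (σ v) := by
    intro f v
    rw [lamMap, if_pos (hp v), hparv v]
    simp [hlamdef]
  have hmem : ∀ f : l2 V, Memℓp (lamMap T lam ⇑f) 2 := by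
    intro f
    apply (memℓp_two_iff' _).2
    have h1 : (fun v => ‖lamMap T lam (⇑f) v‖ ^ 2) = (fun v => ‖f v‖ ^ 2) ∘ σ := by
      funext v
      simp only [Function.comp_apply, hlamMap]
    rw [h1]
    exact σ.summable_iff.2 (l2_summable_sq f)
  have hdense : Dense ((shift T lam).domain : Set (l2 V)) := by
    have h1 : ((shift T lam).domain : Set (l2 V)) = Set.univ :=
      Set.eq_univ_of_forall (fun f => hmem f)
    rw [h1]
    exact dense_univ
  have hnormS : ∀ (f : l2 V) (hf : f ∈ (shift T lam).domain),
      ‖(shift T lam ⟨f, hf⟩ : l2 V)‖ = ‖f‖ := by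
    intro f hf
    have h1 : ‖(shift T lam ⟨f, hf⟩ : l2 V)‖ ^ 2 = ‖f‖ ^ 2 := by
      rw [norm_shift_sq, l2_norm_sq f,
        ← Equiv.tsum_eq σ (fun v => ‖f v‖ ^ 2)]
      exact tsum_congr fun v => by
        rw [show (((⟨f, hf⟩ : (shift T lam).domain)) : l2 V) = f from rfl, hlamMap]
    have h2 := congrArg Real.sqrt h1
    rwa [Real.sqrt_sq (norm_nonneg _), Real.sqrt_sq (norm_nonneg _)] at h2
  -- the candidate adjoint map
  have hmemW : ∀ y : l2 V, Memℓp (fun v => y (σ.symm v)) 2 := by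
    intro y
    apply (memℓp_two_iff' _).2
    have h1 : (fun v => ‖y (σ.symm v)‖ ^ 2) = (fun v => ‖y v‖ ^ 2) ∘ σ.symm := rfl
    rw [h1]
    exact σ.symm.summable_iff.2 (l2_summable_sq y)
  set W : l2 V → l2 V := fun y => (⟨fun v => y (σ.symm v), hmemW y⟩ : l2 V) with hWdef
  have hWapp : ∀ (y : l2 V) (v : V), (W y) v = y (σ.symm v) := fun y v => rfl
  have hadj_ex : ∀ (y : l2 V) (g : (shift T lam).domain),
      (inner ℂ (W y) ((g : l2 V)) : ℂ) = inner ℂ y ((shift T lam g : l2 V)) := by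
    intro y g
    rw [l2_inner_tsum, l2_inner_tsum,
      ← Equiv.tsum_eq σ (fun v => conj ((W y) v) * (g : l2 V) v)]
    apply tsum_congr
    intro v
    simp only [hWapp, Equiv.symm_apply_apply, shift_coe, hlamMap]
  have hadj_mem : ∀ y : l2 V, y ∈ (shift T lam).adjoint.domain := fun y =>
    LinearPMap.mem_adjoint_domain_of_exists _ ⟨W y, hadj_ex y⟩
  have hadj_val : ∀ (y : l2 V) (h' : y ∈ (shift T lam).adjoint.domain),
      (shift T lam).adjoint ⟨y, h'⟩ = W y := fun y h' =>
    LinearPMap.adjoint_apply_eq hdense _ (hadj_ex y)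
  have hnormW : ∀ y : l2 V, ‖W y‖ = ‖y‖ := by
    intro y
    have h1 : ‖W y‖ ^ 2 = ‖y‖ ^ 2 := by
      rw [l2_norm_sq, l2_norm_sq, ← Equiv.tsum_eq σ.symm (fun v => ‖y v‖ ^ 2)]
    have h2 := congrArg Real.sqrt h1
    rwa [Real.sqrt_sq (norm_nonneg _), Real.sqrt_sq (norm_nonneg _)] at h2
  refine ⟨lam, fun v _ => by simp [hlamdef], ?_, ?_, fun y hy => hadj_mem y, ?_⟩
  · -- nonzero
    set v₀ : V := φ.symm 0 with hv₀
    refine ⟨⟨evec v₀, hmem _⟩, fun h0 => ?_⟩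
    have h1 : (shift T lam ⟨evec v₀, hmem _⟩ : l2 V) (σ.symm v₀) = 1 := by
      rw [shift_coe, hlamMap, σ.apply_symm_apply, evec_apply, if_pos rfl]
    rw [h0] at h1
    have h2 : ((0 : l2 V) : V → ℂ) (σ.symm v₀) = 0 := rfl
    rw [h2] at h1
    exact zero_ne_one h1
  · exact hdense
  · intro f hf hf'
    rw [hadj_val f hf', hnormW f, hnormS f hf]

end Backward
/-- a directed tree admits a nonzero formally normal weighted shift with
nonzero weights iff it is isomorphic to `ℤ` with edges `{(n, n+1)}`. -/
theorem admits_formallyNormal_iff_int {V : Type*} (T : DirectedTree V) :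
    (∃ lam : V → ℂ, (∀ v : V, T.HasParent v → lam v ≠ 0) ∧
        (∃ f : (shift T lam).domain, shift T lam f ≠ 0) ∧
        FormallyNormal (shift T lam)) ↔
      ∃ φ : V ≃ ℤ, ∀ a b : V, T.E a b ↔ φ b = φ a + 1 := by
  constructor
  · rintro ⟨lam, hlam, hne, hfn⟩
    exact forward_main T lam hlam hne hfn
  · rintro ⟨φ, hφ⟩
    exact backward_main T φ hφ
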